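/- Let k, n, ℓ, d be natural numbers with ℓ ≥ 1, and let H ⊆ [k]^n be a nonempty class whose ℓ-DS dimension is at most d. View H as a subset of ℝ^n. Then the real vector space of all functions from H to ℝ is spanned by the restrictions to H of the monomials x_1^{e_1}·x_2^{e_2}⋯x_n^{e_n} whose exponent vectors (e_1,…,e_n) satisfy 0 ≤ e_i ≤ k−1 for every i and |{i : e_i ≥ ℓ}| ≤ d. -/

import Mathlib

/-- `B` is an `ℓ`-pseudo-cube: `B` is nonempty and for every `v ∈ B` and every coordinate
`i`, there exist at least `ℓ - 1` distinct vectors `u ∈ B` with `u ≠ v` that agree with `v`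
on all coordinates except (possibly) `i`. -/
def IsPseudoCube {ι α : Type*} (ℓ : ℕ) (B : Set (ι → α)) : Prop :=
  B.Nonempty ∧ ∀ v ∈ B, ∀ i : ι, ∃ U : Finset (ι → α), U.card = ℓ - 1 ∧
    ∀ u ∈ U, u ∈ B ∧ u ≠ v ∧ ∀ j, j ≠ i → u j = v j

/-- The coordinate set `I ⊆ [n]` is `ℓ`-DS-shattered by `H ⊆ [k]^n`: the projection of `H`
onto the coordinates in `I` contains an `(ℓ+1)`-pseudo-cube. -/
def DSShattered {n k : ℕ} (ℓ : ℕ) (H : Set (Fin n → Fin k)) (I : Finset (Fin n)) : Prop :=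
  ∃ B : Set ({ i // i ∈ I } → Fin k),
    B ⊆ (fun h (i : { i // i ∈ I }) => h i.1) '' H ∧ IsPseudoCube (ℓ + 1) B

open Finset

namespace MonoSpanAux

variable {X : Type*} {n k : ℕ}

/-- monomial function -/
def mono (χ : X → Fin n → Fin k) (e : Fin n → ℕ) : X → ℝ :=
  fun x => ∏ i, ((χ x i : ℕ) : ℝ) ^ e i

lemma phi_expand [Fintype X] (χ : X → Fin n → Fin k) (φ : (X → ℝ) →ₗ[ℝ] ℝ)
    (c : Fin n → ℕ → ℝ) (D : Fin n → ℕ)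
    (hz : ∀ e : Fin n → ℕ, (∀ i, e i < D i) → φ (mono χ e) = 0) :
    φ (fun x => ∏ i, ∑ j ∈ Finset.range (D i), c i j * ((χ x i : ℕ) : ℝ) ^ j) = 0 := by
  have hfun : (fun x => ∏ i, ∑ j ∈ Finset.range (D i), c i j * ((χ x i : ℕ) : ℝ) ^ j)
      = ∑ p ∈ Fintype.piFinset (fun i => Finset.range (D i)),
          (∏ i, c i (p i)) • mono χ p := by
    funext x
    rw [Finset.sum_apply]
    rw [Finset.prod_univ_sum]
    refine Finset.sum_congr rfl fun p _ => ?_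
    simp [mono, Finset.prod_mul_distrib, Pi.smul_apply, smul_eq_mul]
  rw [hfun, map_sum]
  refine Finset.sum_eq_zero fun p hp => ?_
  rw [map_smul, hz p (fun i => by
    have := (Fintype.mem_piFinset.mp hp) i
    simpa using this), smul_zero]

/-- 1-D interpolation giving coefficients of degree < m polynomial matching r on A. -/
lemma exists_coeffs (A : Finset ℝ) (m : ℕ) (hm : 1 ≤ m) (hcard : A.card ≤ m) (r : ℝ → ℝ) :
    ∃ c : ℕ → ℝ, ∀ a ∈ A, ∑ j ∈ Finset.range m, c j * a ^ j = r a := by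
  classical
  set p := Lagrange.interpolate A id r with hp
  have hdeg : p.degree < A.card := Lagrange.degree_interpolate_lt _ (Set.injOn_id _)
  have hnat : p.natDegree < m := by
    rcases eq_or_ne p 0 with h0 | h0
    · rw [h0, Polynomial.natDegree_zero]; omega
    · rw [Polynomial.natDegree_lt_iff_degree_lt h0]
      exact lt_of_lt_of_le hdeg (by exact_mod_cast hcard)
  refine ⟨fun j => p.coeff j, fun a ha => ?_⟩
  have := Polynomial.eval_eq_sum_range' hnat a
  rw [← this, hp]
  simpa using Lagrange.eval_interpolate_at_node r (Set.injOn_id _) ha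

/-- indicator of a point of `Fin k` as a polynomial of degree `< k`. -/
lemma exists_indicator_coeffs (hk : 1 ≤ k) (t₀ : Fin k) :
    ∃ c : ℕ → ℝ, ∀ t : Fin k,
      ∑ j ∈ Finset.range k, c j * ((t : ℕ) : ℝ) ^ j = if t = t₀ then 1 else 0 := by
  classical
  set A : Finset ℝ := Finset.image (fun t : Fin k => ((t : ℕ) : ℝ)) Finset.univ with hA
  have hcard : A.card ≤ k := by
    rw [hA]
    refine le_trans Finset.card_image_le ?_
    simp
  obtain ⟨c, hc⟩ := exists_coeffs A k hk hcard
    (fun a => if a = ((t₀ : ℕ) : ℝ) then 1 else 0)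
  refine ⟨c, fun t => ?_⟩
  have hmem : ((t : ℕ) : ℝ) ∈ A := by simp [hA]
  rw [hc _ hmem]
  have hiff : (((t : ℕ) : ℝ) = ((t₀ : ℕ) : ℝ)) ↔ t = t₀ := by
    constructor
    · intro h; exact Fin.ext (Nat.cast_injective h)
    · intro h; rw [h]
  simp [hiff]

lemma phi_eq_sum [Fintype X] [DecidableEq X] (φ : (X → ℝ) →ₗ[ℝ] ℝ) (f : X → ℝ) :
    φ f = ∑ x, f x * φ (Pi.single x (1:ℝ)) := by
  conv_lhs => rw [← Finset.univ_sum_single f]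
  rw [map_sum]
  refine Finset.sum_congr rfl fun x _ => ?_
  have h : (Pi.single x (f x) : X → ℝ) = f x • (Pi.single x (1:ℝ) : X → ℝ) := by
    funext y
    by_cases h : y = x <;> simp [Pi.single_apply, h]
  rw [h, map_smul, smul_eq_mul]

end MonoSpanAux

open MonoSpanAux

/-- If `H ⊆ [k]^n` is nonempty with `ℓ`-DS dimension at most `d`, then the space of all
real-valued functions on `H` is spanned by the restrictions to `H ⊆ ℝ^n` of the monomials
`x_1^{e_1} ⋯ x_n^{e_n}` with `0 ≤ e_i ≤ k - 1` for all `i` and `e_i ≥ ℓ` for at most `d`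
indices `i`. -/
theorem monomials_span (k n ℓ d : ℕ) (hℓ : 1 ≤ ℓ) (H : Set (Fin n → Fin k))
    (hne : H.Nonempty)
    (hdim : ∀ I : Finset (Fin n), DSShattered ℓ H I → I.card ≤ d) :
    Submodule.span ℝ {f : H → ℝ | ∃ e : Fin n → ℕ,
        (∀ i, e i ≤ k - 1) ∧
        (Finset.univ.filter fun i => ℓ ≤ e i).card ≤ d ∧
        f = fun h : H => ∏ i, ((h.1 i : ℕ) : ℝ) ^ e i} = ⊤ := by
  classical
  obtain ⟨h₀, hh₀⟩ := hne
  haveI : Fintype H := (Set.toFinite H).fintype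
  by_contra hne_top
  have hlt : Submodule.span ℝ {f : H → ℝ | ∃ e : Fin n → ℕ,
        (∀ i, e i ≤ k - 1) ∧
        (Finset.univ.filter fun i => ℓ ≤ e i).card ≤ d ∧
        f = fun h : H => ∏ i, ((h.1 i : ℕ) : ℝ) ^ e i} < ⊤ := lt_top_iff_ne_top.mpr hne_top
  obtain ⟨φ, hφ0, hφmap⟩ := Submodule.exists_dual_map_eq_bot_of_lt_top hlt inferInstance
  set χ : H → Fin n → Fin k := fun x => x.1 with hχ
  have hM : ∀ e : Fin n → ℕ, (∀ i, e i ≤ k - 1) →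
      (Finset.univ.filter fun i => ℓ ≤ e i).card ≤ d → φ (mono χ e) = 0 := by
    intro e h1 h2
    have hmem : mono χ e ∈ Submodule.span ℝ {f : H → ℝ | ∃ e : Fin n → ℕ,
        (∀ i, e i ≤ k - 1) ∧
        (Finset.univ.filter fun i => ℓ ≤ e i).card ≤ d ∧
        f = fun h : H => ∏ i, ((h.1 i : ℕ) : ℝ) ^ e i} :=
      Submodule.subset_span ⟨e, h1, h2, rfl⟩
    have hmm := Submodule.mem_map_of_mem (f := φ) hmem
    rw [hφmap] at hmm
    simpa using hmm
  set μ : H → ℝ := fun x => φ (Pi.single x 1) with hμ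
  -- case n = 0
  rcases Nat.eq_zero_or_pos n with hn | hn
  · subst hn
    have hone : φ (mono χ (fun _ => 0)) = 0 := by
      refine hM _ (fun i => by omega) ?_
      have h : (Finset.univ.filter fun _ : Fin 0 => ℓ ≤ 0) = ∅ := by simp
      simp [h]
    haveI : Subsingleton (Fin 0 → Fin k) := ⟨fun a b => funext fun i => i.elim0⟩
    have hz : φ = 0 := by
      refine LinearMap.ext fun f => ?_
      show φ f = 0
      have hf : f = f ⟨h₀, hh₀⟩ • (mono χ (fun _ => 0)) := by
        funext x
        have hx : x = ⟨h₀, hh₀⟩ := Subtype.ext (Subsingleton.elim _ _)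
        simp [hx, mono]
      rw [hf, map_smul, hone, smul_zero]
    exact hφ0 hz
  -- now n ≥ 1, so k ≥ 1
  have hk : 1 ≤ k := (h₀ ⟨0, hn⟩).pos
  -- Claim 1
  have claim1 : ∃ e : Fin n → ℕ, (∀ i, e i ≤ k - 1) ∧ φ (mono χ e) ≠ 0 := by
    by_contra hcon
    push_neg at hcon
    have hsingle : ∀ x₀ : H, φ (Pi.single x₀ 1) = 0 := by
      intro x₀
      choose c hc using fun i : Fin n => exists_indicator_coeffs hk (x₀.1 i)
      have hz : ∀ e : Fin n → ℕ, (∀ i, e i < k) → φ (mono χ e) = 0 := by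
        intro e he
        exact hcon e (fun i => by have := he i; omega)
      have hexp := phi_expand χ φ c (fun _ => k) hz
      have hfun : (fun x : H => ∏ i, ∑ j ∈ Finset.range k, c i j * ((χ x i : ℕ) : ℝ) ^ j)
          = Pi.single x₀ 1 := by
        funext x
        have hfac : ∀ i, (∑ j ∈ Finset.range k, c i j * ((χ x i : ℕ) : ℝ) ^ j)
            = if χ x i = x₀.1 i then 1 else 0 := fun i => hc i (χ x i)
        by_cases hx : x = x₀
        · subst hx
          have : ∀ i, (∑ j ∈ Finset.range k, c i j * ((χ x i : ℕ) : ℝ) ^ j) = 1 := by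
            intro i; rw [hfac i, if_pos rfl]
          rw [Finset.prod_congr rfl (fun i _ => this i)]
          simp
        · have hx' : χ x ≠ x₀.1 := fun h => hx (Subtype.ext h)
          obtain ⟨i, hi⟩ := Function.ne_iff.mp hx'
          have h0 : (∑ j ∈ Finset.range k, c i j * ((χ x i : ℕ) : ℝ) ^ j) = 0 := by
            rw [hfac i, if_neg hi]
          rw [Finset.prod_eq_zero (Finset.mem_univ i) h0]
          simp [Pi.single_apply, hx]
      rw [hfun] at hexp
      exact hexp
    have hz : φ = 0 := by
      refine LinearMap.ext fun f => ?_
      show φ f = 0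
      rw [phi_eq_sum φ f]
      simp only [hsingle, mul_zero, Finset.sum_const_zero]
    exact hφ0 hz
  obtain ⟨e₀, he₀b, he₀φ⟩ := claim1
  -- minimal number of large coordinates
  set P : ℕ → Prop := fun m => ∃ e : Fin n → ℕ, (∀ i, e i ≤ k - 1) ∧
      (Finset.univ.filter fun i => ℓ ≤ e i).card = m ∧ φ (mono χ e) ≠ 0 with hPdef
  have hP : ∃ m, P m := ⟨_, e₀, he₀b, rfl, he₀φ⟩
  obtain ⟨e, heb, hecard, heφ⟩ := Nat.find_spec hP
  have hdm : d < Nat.find hP := by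
    by_contra h
    push_neg at h
    exact heφ (hM e heb (by rw [hecard]; exact h))
  set I : Finset (Fin n) := Finset.univ.filter (fun i => ℓ ≤ e i) with hI
  have hIcard : I.card = Nat.find hP := hecard
  set proj : H → ({ i // i ∈ I } → Fin k) := fun x i => x.1 i.1 with hproj
  set P0 : H → ℝ := fun x => ∏ i' ∈ Iᶜ, ((x.1 i' : ℕ) : ℝ) ^ e i' with hP0
  set ν : ({ i // i ∈ I } → Fin k) → ℝ :=
    fun w => ∑ x : H, if proj x = w then μ x * P0 x else 0 with hν
  have fiber : ∀ G : ({ i // i ∈ I } → Fin k) → ℝ,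
      ∑ w, ν w * G w = ∑ x : H, μ x * (P0 x * G (proj x)) := by
    intro G
    calc ∑ w, ν w * G w
        = ∑ w, ∑ x : H, (if proj x = w then μ x * P0 x * G w else 0) := by
          refine Finset.sum_congr rfl fun w _ => ?_
          simp only [hν]
          rw [Finset.sum_mul]
          exact Finset.sum_congr rfl fun x _ => by rw [ite_mul, zero_mul]
      _ = ∑ x : H, ∑ w, (if proj x = w then μ x * P0 x * G w else 0) := Finset.sum_comm
      _ = ∑ x : H, μ x * (P0 x * G (proj x)) := by
          refine Finset.sum_congr rfl fun x _ => ?_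
          rw [Finset.sum_ite_eq, if_pos (Finset.mem_univ _), mul_assoc]
  have monoexp : φ (mono χ e)
      = ∑ w, ν w * (∏ i : { i // i ∈ I }, ((w i : ℕ) : ℝ) ^ e i.1) := by
    rw [fiber, phi_eq_sum φ (mono χ e)]
    refine Finset.sum_congr rfl fun x _ => ?_
    rw [mul_comm]
    congr 1
    show mono χ e x = _
    rw [mono, ← Finset.prod_mul_prod_compl I (fun i => ((χ x i : ℕ) : ℝ) ^ e i), mul_comm]
    congr 1
    rw [← Finset.prod_coe_sort I (fun i => ((χ x i : ℕ) : ℝ) ^ e i)]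
  have hex : ∃ w, ν w ≠ 0 := by
    by_contra hno
    push_neg at hno
    apply heφ
    rw [monoexp]
    exact Finset.sum_eq_zero fun w _ => by rw [hno w, zero_mul]
  obtain ⟨w₀, hw₀⟩ := hex
  -- the key cardinality bound
  have keyΛ : ∀ v, ν v ≠ 0 → ∀ i₀ : { i // i ∈ I },
      ℓ + 1 ≤ (Finset.univ.filter fun u : { i // i ∈ I } → Fin k =>
        ν u ≠ 0 ∧ ∀ j, j ≠ i₀ → u j = v j).card := by
    intro v hv i₀
    set Λ : Finset ({ i // i ∈ I } → Fin k) :=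
      Finset.univ.filter (fun u => ν u ≠ 0 ∧ ∀ j, j ≠ i₀ → u j = v j) with hΛdef
    by_contra hΛ
    push_neg at hΛ
    have hΛle : Λ.card ≤ ℓ := by omega
    set A : Finset ℝ := Λ.image (fun u => ((u i₀ : ℕ) : ℝ)) with hA
    obtain ⟨cq, hcq⟩ := exists_coeffs A ℓ hℓ
      (le_trans Finset.card_image_le hΛle)
      (fun a => if a = ((v i₀ : ℕ) : ℝ) then 1 else 0)
    choose cind hcind using fun i : { i // i ∈ I } => exists_indicator_coeffs hk (v i)
    set D : Fin n → ℕ := fun i' =>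
      if i' ∈ I then (if i' = i₀.1 then ℓ else k) else e i' + 1 with hD
    set c : Fin n → ℕ → ℝ := fun i' j =>
      if h : i' ∈ I then (if i' = i₀.1 then cq j else cind ⟨i', h⟩ j)
      else (if j = e i' then 1 else 0) with hc
    have hℓk : ℓ ≤ k - 1 := by
      have h1 : ℓ ≤ e i₀.1 := (Finset.mem_filter.mp i₀.2).2
      exact le_trans h1 (heb i₀.1)
    -- (b): φ kills the product function
    have hgz : φ (fun x : H => ∏ i', ∑ j ∈ Finset.range (D i'),
        c i' j * ((χ x i' : ℕ) : ℝ) ^ j) = 0 := by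
      refine phi_expand χ φ c D ?_
      intro p hp
      have hpb : ∀ i', p i' ≤ k - 1 := by
        intro i'
        have hpi := hp i'
        by_cases h1 : i' ∈ I
        · by_cases h2 : i' = i₀.1
          · simp only [hD, h1, if_true] at hpi; rw [if_pos h2] at hpi; omega
          · simp only [hD, h1, if_true] at hpi; rw [if_neg h2] at hpi; omega
        · simp only [hD, h1, if_false] at hpi
          have := heb i'; omega
      have hsub : (Finset.univ.filter fun i' => ℓ ≤ p i') ⊆ I.erase i₀.1 := by
        intro i' hi'
        rw [Finset.mem_filter] at hi'
        have hpi := hp i'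
        by_cases h1 : i' ∈ I
        · by_cases h2 : i' = i₀.1
          · exfalso; simp only [hD, h1, if_true] at hpi; rw [if_pos h2] at hpi; omega
          · exact Finset.mem_erase.mpr ⟨h2, h1⟩
        · exfalso
          simp only [hD, h1, if_false] at hpi
          have h3 : ¬ ℓ ≤ e i' := by
            intro h
            exact h1 (by rw [hI]; exact Finset.mem_filter.mpr ⟨Finset.mem_univ _, h⟩)
          omega
      have hcard : (Finset.univ.filter fun i' => ℓ ≤ p i').card < Nat.find hP := by
        have h1 : (I.erase i₀.1).card = I.card - 1 := Finset.card_erase_of_mem i₀.2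
        have h2 := Finset.card_le_card hsub
        have h3 : 0 < I.card := Finset.card_pos.mpr ⟨i₀.1, i₀.2⟩
        omega
      by_contra hφp
      by_cases hd : (Finset.univ.filter fun i' => ℓ ≤ p i').card ≤ d
      · exact hφp (hM p hpb hd)
      · exact Nat.find_min hP hcard ⟨p, hpb, rfl, hφp⟩
    -- (a): rewrite the product function in fiber form
    set G : ({ i // i ∈ I } → Fin k) → ℝ :=
      fun w => ∏ i : { i // i ∈ I }, ∑ j ∈ Finset.range (D i.1),
        c i.1 j * ((w i : ℕ) : ℝ) ^ j with hG
    have hgform : (fun x : H => ∏ i', ∑ j ∈ Finset.range (D i'),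
        c i' j * ((χ x i' : ℕ) : ℝ) ^ j)
        = fun x => P0 x * G (proj x) := by
      funext x
      rw [← Finset.prod_mul_prod_compl I
        (fun i' => ∑ j ∈ Finset.range (D i'), c i' j * ((χ x i' : ℕ) : ℝ) ^ j), mul_comm]
      congr 1
      · refine Finset.prod_congr rfl fun i' hi' => ?_
        have h1 : i' ∉ I := Finset.mem_compl.mp hi'
        have hDi : D i' = e i' + 1 := by rw [hD]; simp [h1]
        have hci : ∀ j, c i' j = if j = e i' then 1 else 0 := by
          intro j; rw [hc]; simp [h1]
        rw [hDi]
        simp [hci, ite_mul]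
        rfl
      · rw [← Finset.prod_coe_sort I
          (fun i' => ∑ j ∈ Finset.range (D i'), c i' j * ((χ x i' : ℕ) : ℝ) ^ j)]
    have hφg : φ (fun x => P0 x * G (proj x)) = 0 := by rw [← hgform]; exact hgz
    have hsum0 : ∑ w, ν w * G w = 0 := by
      rw [fiber G]
      rw [phi_eq_sum φ _] at hφg
      rw [← hφg]
      exact Finset.sum_congr rfl fun x _ => (mul_comm _ _)
    have hGv : ∑ w, ν w * G w = ν v := by
      have hterm : ∀ w, ν w * G w = if w = v then ν w else 0 := by
        intro w
        by_cases hw : ν w = 0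
        · rcases eq_or_ne w v with hwv | hwv
          · subst hwv; simp [hw]
          · simp [hw, hwv]
        · by_cases hagree : ∀ j, j ≠ i₀ → w j = v j
          · have hwΛ : w ∈ Λ := Finset.mem_filter.mpr ⟨Finset.mem_univ _, hw, hagree⟩
            have hfacti₀ : (∑ j ∈ Finset.range (D i₀.1), c i₀.1 j * ((w i₀ : ℕ) : ℝ) ^ j)
                = if w i₀ = v i₀ then 1 else 0 := by
              have hmem : ((w i₀ : ℕ) : ℝ) ∈ A := Finset.mem_image_of_mem _ hwΛ
              have h2 : D i₀.1 = ℓ := by rw [hD]; simp [i₀.2]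
              have h3 : ∀ j, c i₀.1 j = cq j := by intro j; rw [hc]; simp [i₀.2]
              rw [h2]
              simp_rw [h3]
              rw [hcq _ hmem]
              have hiff : (((w i₀ : ℕ) : ℝ) = ((v i₀ : ℕ) : ℝ)) ↔ w i₀ = v i₀ := by
                constructor
                · intro h; exact Fin.ext (Nat.cast_injective h)
                · intro h; rw [h]
              simp [hiff]
            have hfact : ∀ i : { i // i ∈ I }, i ≠ i₀ →
                (∑ j ∈ Finset.range (D i.1), c i.1 j * ((w i : ℕ) : ℝ) ^ j) = 1 := by
              intro i hi
              have h2 : i.1 ≠ i₀.1 := fun h => hi (Subtype.ext h)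
              have h3 : D i.1 = k := by rw [hD]; simp [i.2, h2]
              have h4 : ∀ j, c i.1 j = cind i j := by
                intro j; rw [hc]; simp [i.2, h2]
              rw [h3]
              simp_rw [h4]
              rw [hcind i (w i), if_pos (hagree i hi)]
            have hGw : G w = if w i₀ = v i₀ then 1 else 0 := by
              simp only [hG]
              rw [Fintype.prod_eq_single i₀ hfact]
              exact hfacti₀
            by_cases heq : w i₀ = v i₀
            · have hwv : w = v := funext fun j => by
                by_cases hj : j = i₀
                · rw [hj]; exact heq
                · exact hagree j hj
              subst hwv
              simp [hGw]
            · have hne : w ≠ v := fun h => heq (by rw [h])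
              simp [hGw, heq, hne]
          · push_neg at hagree
            obtain ⟨j₀, hj₀ne, hj₀⟩ := hagree
            have hfact0 : (∑ j ∈ Finset.range (D j₀.1), c j₀.1 j * ((w j₀ : ℕ) : ℝ) ^ j)
                = 0 := by
              have h2 : j₀.1 ≠ i₀.1 := fun h => hj₀ne (Subtype.ext h)
              have h3 : D j₀.1 = k := by rw [hD]; simp [j₀.2, h2]
              have h4 : ∀ j, c j₀.1 j = cind j₀ j := by
                intro j; rw [hc]; simp [j₀.2, h2]
              rw [h3]
              simp_rw [h4]
              rw [hcind j₀ (w j₀), if_neg hj₀]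
            have hGw : G w = 0 := by
              simp only [hG]
              exact Finset.prod_eq_zero (Finset.mem_univ j₀) hfact0
            have hne : w ≠ v := fun h => hj₀ (by rw [h])
            simp [hGw, hne]
      rw [Finset.sum_congr rfl (fun w _ => hterm w)]
      rw [Finset.sum_ite_eq' Finset.univ v ν, if_pos (Finset.mem_univ _)]
    exact hv (by rw [← hGv, hsum0])
  -- assemble shattering
  have hsh : DSShattered ℓ H I := by
    refine ⟨{w | ν w ≠ 0}, fun w hw => ?_, ⟨w₀, hw₀⟩, ?_⟩
    · obtain ⟨x, -, hx⟩ := Finset.exists_ne_zero_of_sum_ne_zero hw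
      have hxw : proj x = w := by
        by_contra h
        rw [if_neg h] at hx
        exact hx rfl
      exact ⟨x.1, x.2, hxw⟩
    · intro v hv i₀
      have hkey := keyΛ v hv i₀
      set Λ : Finset ({ i // i ∈ I } → Fin k) :=
        Finset.univ.filter (fun u => ν u ≠ 0 ∧ ∀ j, j ≠ i₀ → u j = v j) with hΛdef
      have herase : ℓ ≤ (Λ.erase v).card := by
        have h1 := Finset.pred_card_le_card_erase (a := v) (s := Λ)
        omega
      obtain ⟨U, hUsub, hUcard⟩ := Finset.exists_subset_card_eq herase
      refine ⟨U, by omega, fun u hu => ?_⟩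
      have h1 := hUsub hu
      have h2 := Finset.mem_of_mem_erase h1
      rw [hΛdef, Finset.mem_filter] at h2
      exact ⟨h2.2.1, Finset.ne_of_mem_erase h1, h2.2.2⟩
  have := hdim I hsh
  omega
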